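/- arXiv:math/0210473 — 6 statements merged into one kernel-verified Lean document; each statement's English description precedes it below -/
import Mathlib

section
/- Any nonempty finite word over an alphabet of L letters can be written as a concatenation of at most L nonempty subwords, each of which begins and ends with the same letter. -/
private lemma split_first {A : Type*} [DecidableEq A] (a : A) :
    ∀ l : List A, a ∈ l → ∃ s t : List A, l = s ++ a :: t ∧ a ∉ s := by
  intro l h
  induction l with
  | nil => simp at h
  | cons b l ih =>
    by_cases hb : a = b
    · exact ⟨[], l, by simp [hb], by simp⟩
    · have hm : a ∈ l := by
        rcases List.mem_cons.mp h with h' | h'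
        · exact absurd h' hb
        · exact h'
      obtain ⟨s, t, hst, hns⟩ := ih hm
      exact ⟨b :: s, t, by simp [hst], by simp [hb, hns]⟩

private lemma word_splitting_aux {A : Type*} [DecidableEq A] :
    ∀ (n : ℕ) (S : Finset A) (w : List A), S.card ≤ n → w ≠ [] →
      (∀ a ∈ w, a ∈ S) →
      ∃ ws : List (List A), ws.length ≤ S.card ∧
        (∀ u ∈ ws, u ≠ [] ∧ u.head? = u.getLast?) ∧ ws.flatten = w := by
  intro n
  induction n with
  | zero =>
    intro S w hc hw hS
    obtain ⟨a, ha⟩ := List.exists_mem_of_ne_nil w hw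
    have : a ∈ S := hS a ha
    have : 0 < S.card := Finset.card_pos.mpr ⟨a, this⟩
    omega
  | succ n ih =>
    intro S w hc hw hS
    obtain ⟨a, w', rfl⟩ := List.exists_cons_of_ne_nil hw
    have haS : a ∈ S := hS a (by simp)
    have hcard : 0 < S.card := Finset.card_pos.mpr ⟨a, haS⟩
    have hmem : a ∈ (a :: w').reverse := by simp
    obtain ⟨s, t, hst, hns⟩ := split_first a _ hmem
    set u : List A := t.reverse ++ [a] with hu
    set v : List A := s.reverse with hv
    have hw_eq : a :: w' = u ++ v := by
      have := congrArg List.reverse hst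
      simpa [hu, hv] using this
    have hu_ne : u ≠ [] := by simp [hu]
    have hu_head : u.head? = some a := by
      obtain ⟨c, l, hul⟩ := List.exists_cons_of_ne_nil hu_ne
      have h1 : (a :: w').head? = some a := rfl
      rw [hw_eq, hul] at h1
      simpa [hul] using h1
    have hu_good : u ≠ [] ∧ u.head? = u.getLast? := by
      refine ⟨hu_ne, ?_⟩
      rw [hu_head, hu]
      simp
    by_cases hvnil : v = []
    · have huw : u = a :: w' := by rw [hw_eq, hvnil, List.append_nil]
      refine ⟨[u], by simpa using hcard, ?_, by simp [huw]⟩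
      intro x hx
      simp at hx
      subst hx
      exact hu_good
    · have hna : a ∉ v := by simpa [hv] using hns
      have hvS : ∀ b ∈ v, b ∈ S.erase a := by
        intro b hb
        refine Finset.mem_erase.mpr ⟨?_, ?_⟩
        · rintro rfl; exact hna hb
        · refine hS b ?_
          rw [hw_eq]
          exact List.mem_append_right _ hb
      have hcard' : (S.erase a).card ≤ n := by
        have := Finset.card_erase_of_mem haS
        omega
      obtain ⟨ws', h1, h2, h3⟩ := ih (S.erase a) v hcard' hvnil hvS
      refine ⟨u :: ws', ?_, ?_, by simp [h3, ← hw_eq]⟩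
      · have := Finset.card_erase_of_mem haS
        simp only [List.length_cons]
        omega
      · intro x hx
        rcases List.mem_cons.mp hx with rfl | hx'
        · exact hu_good
        · exact h2 x hx'

/-- Any nonempty finite word over an alphabet of `L` letters can be written as a
concatenation of at most `L` nonempty subwords, each beginning and ending with the
same letter. -/
theorem word_splitting {A : Type*} [Fintype A] (L : ℕ) (hL : Fintype.card A = L)
    (w : List A) (hw : w ≠ []) :
    ∃ ws : List (List A), ws.length ≤ L ∧
      (∀ u ∈ ws, u ≠ [] ∧ u.head? = u.getLast?) ∧ ws.flatten = w := by
  classical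
  obtain ⟨ws, h1, h2, h3⟩ := word_splitting_aux (Fintype.card A) Finset.univ w
    (by simp) hw (by simp)
  exact ⟨ws, by simpa [hL] using h1, h2, h3⟩
end

section
/- Let Φ be a continuous flow on a compact metric space X and let g : X × ℝ → ℝ be a continuous cocycle for Φ (meaning g(x, s+t) = g(x,s) + g(x·s, t)). Suppose there exist μ > 0 and ν > 0 such that g(x,t) ≤ −μt + ν for all x ∈ X and t ≥ 0. Then the function f(x) := sup_{t ≥ 0} g(x,t) is well defined, finite, and continuous on X. -/
/-- If a jointly continuous cocycle `g` over a continuous flow on a compact metric space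
satisfies `g x t ≤ -μt + ν` for all `x` and `t ≥ 0` (with `μ, ν > 0`), then
`f x = sup_{t ≥ 0} g x t` is a well-defined finite continuous function. -/
theorem sup_cocycle_continuous {X : Type*} [MetricSpace X] [CompactSpace X]
    (φ : X → ℝ → X) (hφ : Continuous fun p : X × ℝ => φ p.1 p.2)
    (h0 : ∀ x, φ x 0 = x) (hadd : ∀ x s t, φ (φ x s) t = φ x (s + t))
    (g : X → ℝ → ℝ) (hg : Continuous fun p : X × ℝ => g p.1 p.2)
    (hcoc : ∀ x s t, g x (s + t) = g x s + g (φ x s) t)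
    (μ ν : ℝ) (hμ : 0 < μ) (hν : 0 < ν)
    (hbound : ∀ x : X, ∀ t : ℝ, 0 ≤ t → g x t ≤ -μ * t + ν) :
    ∃ f : X → ℝ, Continuous f ∧
      ∀ x : X, IsLUB {y : ℝ | ∃ t : ℝ, 0 ≤ t ∧ y = g x t} (f x) := by
  have hg0 : ∀ x, g x 0 = 0 := by
    intro x
    have := hcoc x 0 0
    rw [h0 x] at this
    simp at this
    linarith [this]
  set T : ℝ := ν / μ with hT
  have hT0 : 0 ≤ T := le_of_lt (div_pos hν hμ)
  set S : X → Set ℝ := fun x => g x '' Set.Icc 0 T with hS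
  have hne : ∀ x, (S x).Nonempty := fun x => ⟨g x 0, 0, ⟨le_refl _, hT0⟩, rfl⟩
  have hbdd : ∀ x, BddAbove (S x) := by
    intro x
    refine ⟨ν, ?_⟩
    rintro y ⟨t, ⟨ht0, _⟩, rfl⟩
    have := hbound x t ht0
    nlinarith
  set f : X → ℝ := fun x => sSup (S x) with hf
  refine ⟨f, ?_, ?_⟩
  · -- continuity
    rw [Metric.continuous_iff]
    intro x ε hε
    -- uniform continuity on compact set univ ×ˢ Icc 0 T
    have hK : IsCompact ((Set.univ : Set X) ×ˢ Set.Icc (0:ℝ) T) :=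
      isCompact_univ.prod isCompact_Icc
    have huc : UniformContinuousOn (fun p : X × ℝ => g p.1 p.2)
        ((Set.univ : Set X) ×ˢ Set.Icc (0:ℝ) T) :=
      hK.uniformContinuousOn_of_continuous hg.continuousOn
    rw [Metric.uniformContinuousOn_iff] at huc
    obtain ⟨δ, hδ, hd⟩ := huc (ε/2) (by linarith)
    refine ⟨δ, hδ, fun y hxy => ?_⟩
    have key : ∀ a b : X, dist a b < δ → f a ≤ f b + ε/2 := by
      intro a b hab
      apply csSup_le (hne a)
      rintro z ⟨t, ht, rfl⟩
      have h1 : dist ((a, t) : X × ℝ) (b, t) < δ := by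
        rw [Prod.dist_eq]
        simp only [dist_self]
        exact max_lt hab hδ
      have h2 := hd (a, t) (Set.mk_mem_prod (Set.mem_univ a) ht)
        (b, t) (Set.mk_mem_prod (Set.mem_univ b) ht) h1
      have h3 : g a t ≤ g b t + ε/2 := by
        have := abs_sub_abs_le_abs_sub (g a t) (g b t)
        have := Real.dist_eq (g a t) (g b t) ▸ h2
        have habs : |g a t - g b t| < ε/2 := by
          rw [← Real.dist_eq]; exact h2
        linarith [abs_le.mp (le_of_lt habs) |>.1, abs_le.mp (le_of_lt habs) |>.2]
      have h4 : g b t ≤ f b := le_csSup (hbdd b) ⟨t, ht, rfl⟩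
      linarith
    have h5 := key y x hxy
    have h6 := key x y (by rwa [dist_comm] at hxy)
    rw [Real.dist_eq, abs_lt]
    constructor <;> linarith
  · -- IsLUB
    intro x
    constructor
    · rintro z ⟨t, ht0, rfl⟩
      by_cases htT : t ≤ T
      · exact le_csSup (hbdd x) ⟨t, ⟨ht0, htT⟩, rfl⟩
      · push_neg at htT
        have h1 : g x t ≤ 0 := by
          have := hbound x t ht0
          have : -μ * t + ν ≤ 0 := by
            have : ν ≤ μ * t := by
              rw [hT] at htT
              calc ν = μ * (ν / μ) := by field_simp
                _ ≤ μ * t := by nlinarith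
            linarith
          linarith [hbound x t ht0]
        have h2 : (0:ℝ) ≤ f x := by
          have := le_csSup (hbdd x) (show g x 0 ∈ S x from ⟨0, ⟨le_refl _, hT0⟩, rfl⟩)
          rwa [hg0 x] at this
        linarith
    · intro b hb
      apply csSup_le (hne x)
      rintro z ⟨t, ⟨ht0, _⟩, rfl⟩
      exact hb ⟨t, ht0, rfl⟩
end

section
/- Under the hypotheses of the previous statement, with f(x) = sup_{t ≥ 0} g(x,t), the modified cocycle g_1(x,t) := g(x,t) + f(x·t) − f(x) satisfies g_1(x,t) ≤ 0 for all x ∈ X and t ≥ 0. Moreover there exists T > 1 such that g_1(x,t) ≤ −1 for all x ∈ X and t ≥ T. -/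
/-- With `f x = sup_{t ≥ 0} g x t`, the modified cocycle
`g₁ x t = g x t + f (x·t) - f x` is nonpositive for `t ≥ 0`, and there is `T > 1`
with `g₁ x t ≤ -1` for all `x` and `t ≥ T`. -/
theorem modified_cocycle_nonpositive {X : Type*} [MetricSpace X] [CompactSpace X]
    (φ : X → ℝ → X) (hφ : Continuous fun p : X × ℝ => φ p.1 p.2)
    (h0 : ∀ x, φ x 0 = x) (hadd : ∀ x s t, φ (φ x s) t = φ x (s + t))
    (g : X → ℝ → ℝ) (hg : Continuous fun p : X × ℝ => g p.1 p.2)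
    (hcoc : ∀ x s t, g x (s + t) = g x s + g (φ x s) t)
    (μ ν : ℝ) (hμ : 0 < μ) (hν : 0 < ν)
    (hbound : ∀ x : X, ∀ t : ℝ, 0 ≤ t → g x t ≤ -μ * t + ν)
    (f : X → ℝ) (hf : ∀ x : X, IsLUB {y : ℝ | ∃ t : ℝ, 0 ≤ t ∧ y = g x t} (f x)) :
    (∀ x : X, ∀ t : ℝ, 0 ≤ t → g x t + f (φ x t) - f x ≤ 0) ∧
      ∃ T : ℝ, 1 < T ∧ ∀ x : X, ∀ t : ℝ, T ≤ t → g x t + f (φ x t) - f x ≤ -1 := by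
  have hg0 : ∀ x : X, g x 0 = 0 := by
    intro x
    have := hcoc x 0 0
    rw [h0] at this
    simp at this
    linarith [this]
  have hfge : ∀ x : X, 0 ≤ f x := by
    intro x
    exact (hf x).1 ⟨0, le_refl 0, (hg0 x).symm⟩
  have hfle : ∀ x : X, f x ≤ ν := by
    intro x
    refine (hf x).2 ?_
    rintro y ⟨t, ht, rfl⟩
    have := hbound x t ht
    nlinarith
  have key : ∀ x : X, ∀ t : ℝ, 0 ≤ t → f (φ x t) ≤ f x - g x t := by
    intro x t ht
    refine (hf (φ x t)).2 ?_
    rintro y ⟨s, hs, rfl⟩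
    have h1 : g x (t + s) = g x t + g (φ x t) s := hcoc x t s
    have h2 : g x (t + s) ≤ f x := (hf x).1 ⟨t + s, by linarith, rfl⟩
    linarith
  constructor
  · intro x t ht
    have := key x t ht
    linarith
  · refine ⟨max 2 ((2 * ν + 1) / μ), lt_of_lt_of_le one_lt_two (le_max_left _ _), ?_⟩
    intro x t hT
    have ht2 : (2:ℝ) ≤ t := le_trans (le_max_left _ _) hT
    have htμ : (2 * ν + 1) / μ ≤ t := le_trans (le_max_right _ _) hT
    have ht0 : 0 ≤ t := by linarith
    have hb := hbound x t ht0
    have hμt : 2 * ν + 1 ≤ μ * t := by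
      rw [div_le_iff₀ hμ] at htμ
      linarith [htμ]
    have := key x t ht0
    have := hfle (φ x t)
    have := hfge x
    nlinarith
end

section
/- Let Φ be a continuous flow on a compact metric space and let g : X × ℝ → ℝ be a jointly continuous cocycle for Φ with g(x,t) ≤ −μt + ν for all x in a subset C ⊆ X and all t ≥ 0, where μ, ν > 0. Suppose additionally there is a constant C_0 > 0 such that |g(x,t)| < C_0 for all x in a set Y ⊆ X and t ≥ 0. If a sequence x_n ∈ C converges to a point x_0 ∈ Y, then choosing t_0 = (ν + 2C_0)/μ yields a contradiction; hence the closure of C does not meet Y. (In the paper: the set C_ξ = R − R_ξ is closed.) -/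
/-- If a jointly continuous cocycle decays linearly on `C` and is bounded on `Y`, then
the closure of `C` does not meet `Y` (in the paper: the set `C_ξ = R - R_ξ` is closed). -/
theorem closure_disjoint_of_cocycle_decay {X : Type*} [MetricSpace X] [CompactSpace X]
    (φ : X → ℝ → X) (hφ : Continuous fun p : X × ℝ => φ p.1 p.2)
    (h0 : ∀ x, φ x 0 = x) (hadd : ∀ x s t, φ (φ x s) t = φ x (s + t))
    (g : X → ℝ → ℝ) (hg : Continuous fun p : X × ℝ => g p.1 p.2)
    (hcoc : ∀ x s t, g x (s + t) = g x s + g (φ x s) t)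
    (C Y : Set X) (μ ν : ℝ) (hμ : 0 < μ) (hν : 0 < ν)
    (hdecay : ∀ x ∈ C, ∀ t : ℝ, 0 ≤ t → g x t ≤ -μ * t + ν)
    (C₀ : ℝ) (hC₀ : 0 < C₀)
    (hbdd : ∀ x ∈ Y, ∀ t : ℝ, 0 ≤ t → |g x t| < C₀) :
    closure C ∩ Y = ∅ := by
  set t₀ : ℝ := (ν + 2 * C₀) / μ with ht₀
  have ht₀pos : 0 ≤ t₀ := by positivity
  have hcont : Continuous fun x : X => g x t₀ :=
    hg.comp (Continuous.prodMk_left t₀)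
  have hclosed : IsClosed {x : X | g x t₀ ≤ -2 * C₀} :=
    isClosed_le hcont continuous_const
  have hsub : C ⊆ {x : X | g x t₀ ≤ -2 * C₀} := by
    intro x hx
    have h := hdecay x hx t₀ ht₀pos
    have : -μ * t₀ + ν = -2 * C₀ := by
      rw [ht₀]
      field_simp
      ring
    rw [this] at h
    exact h
  ext x
  simp only [Set.mem_inter_iff, Set.mem_empty_iff_false, iff_false, not_and]
  intro hxc hxy
  have h1 : g x t₀ ≤ -2 * C₀ := (hclosed.closure_subset_iff.mpr hsub) hxc
  have h2 := hbdd x hxy t₀ ht₀pos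
  have := abs_lt.mp h2
  linarith
end

section
/- Let X be a metric space, A ⊆ X a closed subset, and suppose every continuous real-valued function on A extends to a continuous function on X (Tietze). Let ω be a continuous closed one-form on A with Čech class ξ ∈ Ȟ¹(A;ℝ), and suppose ξ' ∈ Ȟ¹(X;ℝ) satisfies ξ'|_A = ξ. Then there exists a continuous closed one-form ω' on X representing ξ' with ω'|_A = ω. -/
/-- A presentation of a continuous closed one-form: a family of continuous functions
over an open cover. -/
structure PreForm (Y : Type) [TopologicalSpace Y] : Type 1 where
  ι : Type
  U : ι → Set Y
  isOpen : ∀ i, IsOpen (U i)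
  covers : ∀ y : Y, ∃ i, y ∈ U i
  φ : ι → Y → ℝ
  cont : ∀ i, ContinuousOn (φ i) (U i)

/-- `h` is locally constant on the subset `S`. -/
def LocallyConstantOn {Y : Type} [TopologicalSpace Y] (h : Y → ℝ) (S : Set Y) : Prop :=
  ∀ y ∈ S, ∃ V : Set Y, IsOpen V ∧ y ∈ V ∧ ∀ z ∈ V ∩ S, h z = h y

/-- The defining condition for a continuous closed one-form: the differences of local
functions are locally constant on overlaps. -/
def PreForm.IsClosedForm {Y : Type} [TopologicalSpace Y] (ω : PreForm Y) : Prop :=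
  ∀ i j, LocallyConstantOn (fun y => ω.φ i y - ω.φ j y) (ω.U i ∩ ω.U j)

/-- Two presentations define the same continuous closed one-form. -/
def PreForm.Equiv {Y : Type} [TopologicalSpace Y] (ω₁ ω₂ : PreForm Y) : Prop :=
  ω₁.IsClosedForm ∧ ω₂.IsClosedForm ∧
    ∀ i j, LocallyConstantOn (fun y => ω₁.φ i y - ω₂.φ j y) (ω₁.U i ∩ ω₂.U j)

/-- Restriction of a closed one-form to a subset. -/
def PreForm.restrict {Y : Type} [TopologicalSpace Y] (ω : PreForm Y) (A : Set Y) :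
    PreForm A where
  ι := ω.ι
  U i := Subtype.val ⁻¹' ω.U i
  isOpen i := (ω.isOpen i).preimage continuous_subtype_val
  covers a := ω.covers a.val
  φ i a := ω.φ i a.val
  cont i := (ω.cont i).comp continuous_subtype_val.continuousOn (fun a ha => ha)

/-- The differential `df` of a continuous function `f`, as a closed one-form. -/
def PreForm.ofFun {Y : Type} [TopologicalSpace Y] (f : Y → ℝ) (hf : Continuous f) :
    PreForm Y where
  ι := PUnit
  U _ := Set.univ
  isOpen _ := isOpen_univ
  covers _ := ⟨PUnit.unit, trivial⟩
  φ _ := f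
  cont _ := hf.continuousOn

/-- The sum of two closed one-forms. -/
def PreForm.add {Y : Type} [TopologicalSpace Y] (ω₁ ω₂ : PreForm Y) : PreForm Y where
  ι := ω₁.ι × ω₂.ι
  U p := ω₁.U p.1 ∩ ω₂.U p.2
  isOpen p := (ω₁.isOpen p.1).inter (ω₂.isOpen p.2)
  covers y := by
    obtain ⟨i, hi⟩ := ω₁.covers y
    obtain ⟨j, hj⟩ := ω₂.covers y
    exact ⟨⟨i, j⟩, hi, hj⟩
  φ p y := ω₁.φ p.1 y + ω₂.φ p.2 y
  cont p := ((ω₁.cont p.1).mono Set.inter_subset_left).add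
    ((ω₂.cont p.2).mono Set.inter_subset_right)

/-- Two closed one-forms are cohomologous (represent the same Čech class) iff they
differ by the differential of a continuous function. -/
def Cohomologous {Y : Type} [TopologicalSpace Y] (ω₁ ω₂ : PreForm Y) : Prop :=
  ∃ (f : Y → ℝ) (hf : Continuous f), PreForm.Equiv ω₁ (ω₂.add (PreForm.ofFun f hf))

lemma lc_congr {Y : Type} [TopologicalSpace Y] {h₁ h₂ : Y → ℝ} {S : Set Y}
    (he : ∀ y ∈ S, h₁ y = h₂ y) (h : LocallyConstantOn h₁ S) : LocallyConstantOn h₂ S := by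
  intro y hy
  obtain ⟨V, hV, hyV, hc⟩ := h y hy
  exact ⟨V, hV, hyV, fun z hz => by rw [← he z hz.2, ← he y hy]; exact hc z hz⟩

lemma lc_mono {Y : Type} [TopologicalSpace Y] {h : Y → ℝ} {S T : Set Y} (hTS : T ⊆ S)
    (hl : LocallyConstantOn h S) : LocallyConstantOn h T := by
  intro y hy
  obtain ⟨V, hV, hyV, hc⟩ := hl y (hTS hy)
  exact ⟨V, hV, hyV, fun z hz => hc z ⟨hz.1, hTS hz.2⟩⟩

lemma lc_restrict {Y : Type} [TopologicalSpace Y] {A : Set Y} {h : Y → ℝ} {S : Set Y}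
    (hl : LocallyConstantOn h S) :
    LocallyConstantOn (fun a : A => h a) (Subtype.val ⁻¹' S) := by
  intro y hy
  obtain ⟨V, hV, hyV, hc⟩ := hl y hy
  exact ⟨Subtype.val ⁻¹' V, hV.preimage continuous_subtype_val, hyV,
    fun z hz => hc z ⟨hz.1, hz.2⟩⟩

/-- Tietze extension for closed one-forms: if `ω` is a closed one-form on a closed subset
`A` whose class is the restriction of a class on `X` (represented by `Ω`), then there is a
closed one-form `ω'` on `X` cohomologous to `Ω` with `ω'|_A = ω`. -/
theorem tietze_extension_closed_one_forms {X : Type} [MetricSpace X]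
    (A : Set X) (hA : IsClosed A)
    (tietze : ∀ f : A → ℝ, Continuous f → ∃ F : X → ℝ, Continuous F ∧ ∀ a : A, F a = f a)
    (ω : PreForm A) (hω : ω.IsClosedForm)
    (Ω : PreForm X) (hΩ : Ω.IsClosedForm)
    (hclass : Cohomologous (Ω.restrict A) ω) :
    ∃ ω' : PreForm X, ω'.IsClosedForm ∧ Cohomologous ω' Ω ∧
      PreForm.Equiv (ω'.restrict A) ω := by
  obtain ⟨f, hf, hE1, hE2, hE3⟩ := hclass
  obtain ⟨F, hF, hFa⟩ := tietze f hf
  have hgc : Continuous (fun x => -F x) := hF.neg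
  have hcl : (Ω.add (PreForm.ofFun (fun x => -F x) hgc)).IsClosedForm := by
    intro i j
    have h0 := lc_mono (S := Ω.U i.1 ∩ Ω.U j.1)
      (fun y (hy : y ∈ (Ω.U i.1 ∩ Set.univ) ∩ (Ω.U j.1 ∩ Set.univ)) => ⟨hy.1.1, hy.2.1⟩)
      (hΩ i.1 j.1)
    exact lc_congr (fun y _ => by show _ = (Ω.φ i.1 y + -F y) - (Ω.φ j.1 y + -F y); ring) h0
  refine ⟨Ω.add (PreForm.ofFun (fun x => -F x) hgc), hcl,
    ⟨fun x => -F x, hgc, hcl, hcl, hcl⟩, ?_, hω, ?_⟩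
  · intro i j
    have h0 := lc_mono
      (S := Subtype.val ⁻¹' (Ω.U i.1 ∩ Ω.U j.1))
      (fun a (ha : a ∈ (Subtype.val ⁻¹' (Ω.U i.1 ∩ Set.univ)) ∩
        (Subtype.val ⁻¹' (Ω.U j.1 ∩ Set.univ))) => ⟨ha.1.1, ha.2.1⟩)
      (lc_restrict (A := A) (hΩ i.1 j.1))
    exact lc_congr (fun a _ => by
      show _ = (Ω.φ i.1 a.val + -F a.val) - (Ω.φ j.1 a.val + -F a.val); ring) h0
  · intro i j
    have h3 := hE3 i.1 (j, PUnit.unit)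
    have h0 := lc_mono
      (S := (Subtype.val ⁻¹' Ω.U i.1) ∩ (ω.U j ∩ Set.univ))
      (fun a (ha : a ∈ (Subtype.val ⁻¹' (Ω.U i.1 ∩ Set.univ)) ∩ ω.U j) =>
        ⟨ha.1.1, ha.2, trivial⟩) h3
    refine lc_congr (fun a _ => ?_) h0
    show Ω.φ i.1 a.val - (ω.φ j a + f a) = (Ω.φ i.1 a.val + -F a.val) - ω.φ j a
    rw [hFa a]; ring
end

section
/- Let Φ be a continuous flow on a compact metric space X, let g be a jointly continuous cocycle for Φ, and fix T ≥ 1, δ > 0. Suppose that g(x,t) < −1/2 whenever x lies in a flow-invariant set C, t ≥ T, and d(x, x·t) < δ (i.e., along (δ,T)-cycles). Let y_1,...,y_k ∈ X be centers of open δ/2-balls covering X, and let M bound |g(x,t)| for all x ∈ X and 0 ≤ t ≤ T. Then for every x ∈ C and t ≥ 0, g(x,t) < (2k−1)M + 1/2 − (⌊t/T⌋ + 1 − k)/(2k); consequently g(x,t) ≤ −μt + ν with μ = 1/(2kT) and ν = (2k−1)M + 1/2. -/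
open Finset

/-- cocycle vanishes at time 0 -/
private lemma pde_gzero {X : Type*} (φ : X → ℝ → X) (g : X → ℝ → ℝ)
    (h0 : ∀ x, φ x 0 = x)
    (hcoc : ∀ x s t, g x (s + t) = g x s + g (φ x s) t) (z : X) : g z 0 = 0 := by
  have h := hcoc z 0 0
  rw [add_zero, h0 z] at h
  linarith

/-- Chain lemma: if the itinerary returns to the same ball index at time `n·T`,
then `g x (nT) ≤ -((number of visits to that ball) - 1)/2`. -/
private lemma pde_mid {X : Type*} {k : ℕ} (φ : X → ℝ → X) (g : X → ℝ → ℝ) (T : ℝ)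
    (h0 : ∀ x, φ x 0 = x) (hadd : ∀ x s t, φ (φ x s) t = φ x (s + t))
    (hcoc : ∀ x s t, g x (s + t) = g x s + g (φ x s) t)
    (C : Set X) (hinv : ∀ x ∈ C, ∀ t : ℝ, φ x t ∈ C)
    (a : X → Fin k)
    (hcyc : ∀ z ∈ C, ∀ p : ℕ, 1 ≤ p → a (φ z ((p : ℝ) * T)) = a z →
      g z ((p : ℝ) * T) < -(1 / 2)) :
    ∀ n : ℕ, ∀ x ∈ C, a (φ x ((n : ℝ) * T)) = a x →
      g x ((n : ℝ) * T) ≤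
        -((((Finset.range (n + 1)).filter fun j : ℕ => a (φ x ((j : ℝ) * T)) = a x).card : ℝ) - 1) / 2 := by
  intro n
  induction n using Nat.strong_induction_on with
  | _ n IH =>
  intro x hx hret
  rcases Nat.eq_zero_or_pos n with hn | hn
  · subst hn
    have hcard : ((Finset.range 1).filter fun j : ℕ => a (φ x ((j : ℝ) * T)) = a x).card = 1 := by
      rw [range_one, filter_singleton]
      simp [h0]
    rw [hcard]
    have : ((0 : ℕ) : ℝ) * T = 0 := by norm_num
    rw [this, pde_gzero φ g h0 hcoc x]
    norm_num
  · -- n ≥ 1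
    set P := (Finset.range (n + 1)).filter (fun j : ℕ => 1 ≤ j ∧ a (φ x ((j : ℝ) * T)) = a x) with hP
    have hPne : P.Nonempty := ⟨n, mem_filter.mpr ⟨mem_range.mpr (by omega), hn, hret⟩⟩
    set p := P.min' hPne with hpdef
    obtain ⟨hpr, hp1, hpa⟩ := mem_filter.mp (P.min'_mem hPne)
    have hpn : p ≤ n := by have := mem_range.mp hpr; omega
    have hcycle : g x ((p : ℝ) * T) < -(1 / 2) := hcyc x hx p hp1 hpa
    set x' := φ x ((p : ℝ) * T) with hx'def
    have hx' : x' ∈ C := hinv x hx _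
    have e : (p : ℝ) * T + ((n - p : ℕ) : ℝ) * T = (n : ℝ) * T := by
      rw [Nat.cast_sub hpn]; ring
    have hsum : g x ((n : ℝ) * T) = g x ((p : ℝ) * T) + g x' (((n - p : ℕ)) * T) := by
      rw [← e, hcoc]
    have hphi : φ x' (((n - p : ℕ) : ℝ) * T) = φ x ((n : ℝ) * T) := by
      rw [hx'def, hadd, e]
    have hret' : a (φ x' (((n - p : ℕ) : ℝ) * T)) = a x' := by
      rw [hphi, hret]; exact hpa.symm
    have hIH := IH (n - p) (by omega) x' hx' hret'
    -- card comparison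
    set F := (Finset.range (n + 1)).filter (fun j : ℕ => a (φ x ((j : ℝ) * T)) = a x) with hF
    set F' := (Finset.range (n - p + 1)).filter (fun j : ℕ => a (φ x' ((j : ℝ) * T)) = a x') with hF'
    have hsub : F ⊆ insert 0 (F'.image (· + p)) := by
      intro j hj
      obtain ⟨hjr, hja⟩ := mem_filter.mp hj
      rcases Nat.eq_zero_or_pos j with h | h
      · subst h; exact mem_insert_self _ _
      · apply mem_insert_of_mem
        have hpj : p ≤ j := P.min'_le j (mem_filter.mpr ⟨hjr, h, hja⟩)
        have hjn : j ≤ n := by have := mem_range.mp hjr; omega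
        refine mem_image.mpr ⟨j - p, ?_, by omega⟩
        have e2 : (p : ℝ) * T + ((j - p : ℕ) : ℝ) * T = (j : ℝ) * T := by
          rw [Nat.cast_sub hpj]; ring
        refine mem_filter.mpr ⟨mem_range.mpr (by omega), ?_⟩
        have : φ x' (((j - p : ℕ) : ℝ) * T) = φ x ((j : ℝ) * T) := by
          rw [hx'def, hadd, e2]
        rw [this, hja]; exact hpa.symm
    have hcard : F.card ≤ F'.card + 1 := by
      calc F.card ≤ (insert 0 (F'.image (· + p))).card := card_le_card hsub
        _ ≤ (F'.image (· + p)).card + 1 := card_insert_le _ _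
        _ ≤ F'.card + 1 := by have := card_image_le (s := F') (f := (· + p)); omega
    have hcR : (F.card : ℝ) ≤ (F'.card : ℝ) + 1 := by exact_mod_cast hcard
    rw [hsum]
    linarith [hIH, hcycle]

/-- Block-decomposition bound: if the itinerary up to step `n` stays in the letter
set `S`, then `g x (nT) ≤ (|S| - 1) M`. -/
private lemma pde_block {X : Type*} {k : ℕ} (φ : X → ℝ → X) (g : X → ℝ → ℝ) (T : ℝ)
    (h0 : ∀ x, φ x 0 = x) (hadd : ∀ x s t, φ (φ x s) t = φ x (s + t))
    (hcoc : ∀ x s t, g x (s + t) = g x s + g (φ x s) t)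
    (C : Set X) (hinv : ∀ x ∈ C, ∀ t : ℝ, φ x t ∈ C)
    (a : X → Fin k) (M : ℝ) (hM0 : 0 ≤ M)
    (hMT : ∀ z ∈ C, g z T ≤ M)
    (hchain : ∀ z ∈ C, ∀ n : ℕ, a (φ z ((n : ℝ) * T)) = a z → g z ((n : ℝ) * T) ≤ 0) :
    ∀ S : Finset (Fin k), ∀ x ∈ C, ∀ n : ℕ,
      (∀ j : ℕ, j ≤ n → a (φ x ((j : ℝ) * T)) ∈ S) →
      g x ((n : ℝ) * T) ≤ ((S.card : ℝ) - 1) * M := by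
  intro S
  induction S using Finset.strongInduction with
  | _ S IH =>
  intro x hx n hS
  have haS : a x ∈ S := by
    have h := hS 0 (Nat.zero_le n)
    simpa [h0] using h
  have hScard : 1 ≤ S.card := Finset.card_pos.mpr ⟨_, haS⟩
  have hScardR : (1 : ℝ) ≤ (S.card : ℝ) := by exact_mod_cast hScard
  set P := (Finset.range (n + 1)).filter (fun j : ℕ => a (φ x ((j : ℝ) * T)) = a x) with hP
  have hPne : P.Nonempty := ⟨0, mem_filter.mpr ⟨mem_range.mpr (by omega), by simp [h0]⟩⟩
  set p := P.max' hPne with hpdef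
  obtain ⟨hpr, hpa⟩ := mem_filter.mp (P.max'_mem hPne)
  have hpn : p ≤ n := by have := mem_range.mp hpr; omega
  have hchain_p : g x ((p : ℝ) * T) ≤ 0 := hchain x hx p hpa
  by_cases hpe : n ≤ p
  · have : p = n := by omega
    rw [← this]
    calc g x ((p : ℝ) * T) ≤ 0 := hchain_p
      _ ≤ ((S.card : ℝ) - 1) * M := mul_nonneg (by linarith) hM0
  · have hplt : p < n := by omega
    set m := n - p - 1 with hm
    have hn' : p + 1 + m = n := by omega
    set x1 := φ x ((p : ℝ) * T) with hx1def
    have hx1 : x1 ∈ C := hinv x hx _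
    set x2 := φ x1 T with hx2def
    have hx2 : x2 ∈ C := hinv x1 hx1 _
    have e1 : (p : ℝ) * T + (T + (m : ℝ) * T) = (n : ℝ) * T := by
      rw [← hn']; push_cast; ring
    have hsplit : g x ((n : ℝ) * T) = g x ((p : ℝ) * T) + (g x1 T + g x2 ((m : ℝ) * T)) := by
      rw [← e1, hcoc, hcoc]
    have hb1 : g x1 T ≤ M := hMT x1 hx1
    -- tail via IH on the smaller letter set
    have hIH := IH (S.erase (a x)) (Finset.erase_ssubset haS) x2 hx2 m ?_
    · have hcerase : ((S.erase (a x)).card : ℝ) = (S.card : ℝ) - 1 := by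
        rw [Finset.card_erase_of_mem haS, Nat.cast_sub hScard]; norm_num
      rw [hcerase] at hIH
      have hkey : ((S.card : ℝ) - 1 - 1) * M + M = ((S.card : ℝ) - 1) * M := by ring
      rw [hsplit]
      linarith
    · intro j hj
      have hphi : φ x2 ((j : ℝ) * T) = φ x (((p + 1 + j : ℕ) : ℝ) * T) := by
        rw [hx2def, hx1def, hadd, hadd]
        congr 1
        push_cast; ring
      rw [hphi]
      refine Finset.mem_erase.mpr ⟨?_, hS (p + 1 + j) (by omega)⟩
      intro hEq
      have : (p + 1 + j) ∈ P := mem_filter.mpr ⟨mem_range.mpr (by omega), hEq⟩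
      have := P.le_max' _ this
      omega


/-- The pigeonhole estimate: if `g x t < -1/2` along `(δ,T)`-cycles based in a
flow-invariant set `C`, the space is covered by `k` balls of radius `δ/2`, and `M`
bounds `|g|` on times in `[0,T]`, then for all `x ∈ C` and `t ≥ 0`,
`g x t < (2k-1)M + 1/2 - (⌊t/T⌋ + 1 - k)/(2k)`; consequently
`g x t ≤ -t/(2kT) + (2k-1)M + 1/2`. -/
theorem pigeonhole_decay_estimate {X : Type*} [MetricSpace X] [CompactSpace X]
    (φ : X → ℝ → X) (hφ : Continuous fun p : X × ℝ => φ p.1 p.2)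
    (h0 : ∀ x, φ x 0 = x) (hadd : ∀ x s t, φ (φ x s) t = φ x (s + t))
    (g : X → ℝ → ℝ) (hg : Continuous fun p : X × ℝ => g p.1 p.2)
    (hcoc : ∀ x s t, g x (s + t) = g x s + g (φ x s) t)
    (T δ : ℝ) (hT : 1 ≤ T) (hδ : 0 < δ)
    (C : Set X) (hinv : ∀ x ∈ C, ∀ t : ℝ, φ x t ∈ C)
    (hcycle : ∀ x ∈ C, ∀ t : ℝ, T ≤ t → dist x (φ x t) < δ → g x t < -(1 / 2))
    (k : ℕ) (hk : 0 < k) (y : Fin k → X)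
    (hcover : ∀ x : X, ∃ i : Fin k, dist x (y i) < δ / 2)
    (M : ℝ) (hM : ∀ x : X, ∀ t : ℝ, 0 ≤ t → t ≤ T → |g x t| ≤ M) :
    ∀ x ∈ C, ∀ t : ℝ, 0 ≤ t →
      g x t < (2 * (k : ℝ) - 1) * M + 1 / 2 - ((⌊t / T⌋ : ℝ) + 1 - k) / (2 * k) ∧
      g x t ≤ -(1 / (2 * (k : ℝ) * T)) * t + ((2 * (k : ℝ) - 1) * M + 1 / 2) := by
  have hT0 : (0 : ℝ) < T := by linarith
  have hkR : (0 : ℝ) < (k : ℝ) := by exact_mod_cast hk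
  have hkR1 : (1 : ℝ) ≤ (k : ℝ) := by exact_mod_cast hk
  -- ball-index function
  set a : X → Fin k := fun z => (hcover z).choose with ha_def
  have ha : ∀ z : X, dist z (y (a z)) < δ / 2 := fun z => (hcover z).choose_spec
  -- cycle estimate in itinerary form
  have hcyc : ∀ z ∈ C, ∀ p : ℕ, 1 ≤ p → a (φ z ((p : ℝ) * T)) = a z →
      g z ((p : ℝ) * T) < -(1 / 2) := by
    intro z hz p hp1 heq
    have hp1R : (1 : ℝ) ≤ (p : ℝ) := by exact_mod_cast hp1
    apply hcycle z hz _ (by nlinarith)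
    have h1 : dist z (φ z ((p : ℝ) * T)) ≤ dist z (y (a z)) + dist (y (a z)) (φ z ((p : ℝ) * T)) :=
      dist_triangle _ _ _
    have h2 : dist (y (a z)) (φ z ((p : ℝ) * T)) < δ / 2 := by
      rw [dist_comm, ← heq]
      exact ha _
    have h3 := ha z
    linarith
  have hg0 : ∀ z : X, g z 0 = 0 := pde_gzero φ g h0 hcoc
  intro x hx t ht
  have hM0 : 0 ≤ M := by
    have h := hM x 0 le_rfl (by linarith)
    rw [hg0 x] at h
    simpa using h
  have hMT : ∀ z ∈ C, g z T ≤ M := fun z _ =>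
    le_trans (le_abs_self _) (hM z T (by linarith) le_rfl)
  have hchain : ∀ z ∈ C, ∀ n : ℕ, a (φ z ((n : ℝ) * T)) = a z → g z ((n : ℝ) * T) ≤ 0 := by
    intro z hz n hn
    have h := pde_mid φ g T h0 hadd hcoc C hinv a hcyc n z hz hn
    have hc : 1 ≤ ((Finset.range (n + 1)).filter fun j : ℕ => a (φ z ((j : ℝ) * T)) = a z).card :=
      Finset.card_pos.mpr ⟨0, mem_filter.mpr ⟨mem_range.mpr (by omega), by simp [h0]⟩⟩
    have hcR : (1 : ℝ) ≤ (((Finset.range (n + 1)).filter fun j : ℕ => a (φ z ((j : ℝ) * T)) = a z).card : ℝ) := by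
      exact_mod_cast hc
    linarith
  -- floor setup
  set n : ℕ := (⌊t / T⌋).toNat with hn_def
  have hfl : ((n : ℕ) : ℝ) = ((⌊t / T⌋ : ℤ) : ℝ) := by
    have h' : ((⌊t / T⌋.toNat : ℤ)) = ⌊t / T⌋ :=
      Int.toNat_of_nonneg (Int.floor_nonneg.mpr (div_nonneg ht hT0.le))
    rw [hn_def]
    exact_mod_cast h'
  have hnle : (n : ℝ) * T ≤ t := by
    have h1 : ((⌊t / T⌋ : ℤ) : ℝ) ≤ t / T := Int.floor_le _
    rw [hfl]
    calc ((⌊t / T⌋ : ℤ) : ℝ) * T ≤ (t / T) * T := mul_le_mul_of_nonneg_right h1 hT0.le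
      _ = t := div_mul_cancel₀ t hT0.ne'
  have hlt : t < ((n : ℝ) + 1) * T := by
    have h2 : t / T < ((⌊t / T⌋ : ℤ) : ℝ) + 1 := Int.lt_floor_add_one _
    rw [hfl]
    calc t = (t / T) * T := (div_mul_cancel₀ t hT0.ne').symm
      _ < (((⌊t / T⌋ : ℤ) : ℝ) + 1) * T := mul_lt_mul_of_pos_right h2 hT0
  -- pigeonhole: popular ball index
  have hsum_card : ∑ i : Fin k, ((Finset.range (n + 1)).filter fun j : ℕ => a (φ x ((j : ℝ) * T)) = i).card = n + 1 := by
    have h := Finset.card_eq_sum_card_fiberwise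
      (s := Finset.range (n + 1)) (t := (Finset.univ : Finset (Fin k)))
      (f := fun j : ℕ => a (φ x ((j : ℝ) * T))) (fun j _ => Finset.mem_univ _)
    rw [card_range] at h
    exact h.symm
  obtain ⟨i, hq⟩ : ∃ i : Fin k, (n : ℝ) + 1 ≤ (k : ℝ) *
      (((Finset.range (n + 1)).filter fun j : ℕ => a (φ x ((j : ℝ) * T)) = i).card : ℝ) := by
    by_contra h
    push_neg at h
    have hne : (Finset.univ : Finset (Fin k)).Nonempty := ⟨⟨0, hk⟩, Finset.mem_univ _⟩
    have hlt2 : ∑ i : Fin k, ((((Finset.range (n + 1)).filter fun j : ℕ => a (φ x ((j : ℝ) * T)) = i).card : ℝ)) <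
        ∑ _i : Fin k, ((n : ℝ) + 1) / (k : ℝ) := by
      apply Finset.sum_lt_sum_of_nonempty hne
      intro i _
      rw [lt_div_iff₀ hkR]
      have := h i
      linarith [h i]
    have hL : ∑ i : Fin k, ((((Finset.range (n + 1)).filter fun j : ℕ => a (φ x ((j : ℝ) * T)) = i).card : ℝ)) = (n : ℝ) + 1 := by
      rw [← Nat.cast_sum]
      rw [hsum_card]
      push_cast; ring
    have hR : ∑ _i : Fin k, ((n : ℝ) + 1) / (k : ℝ) = (n : ℝ) + 1 := by
      rw [Finset.sum_const, Finset.card_univ, Fintype.card_fin, nsmul_eq_mul]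
      field_simp
    rw [hL, hR] at hlt2
    linarith
  set F := (Finset.range (n + 1)).filter (fun j : ℕ => a (φ x ((j : ℝ) * T)) = i) with hF
  set q := F.card with hq_def
  have hq1 : 1 ≤ q := by
    by_contra h
    have : q = 0 := by omega
    rw [this] at hq
    push_cast at hq
    nlinarith [Nat.cast_nonneg (α := ℝ) n]
  have hFne : F.Nonempty := Finset.card_pos.mp (by omega)
  set pmin := F.min' hFne with hpmin_def
  set pmax := F.max' hFne with hpmax_def
  obtain ⟨hminr, hmina⟩ := mem_filter.mp (F.min'_mem hFne)
  obtain ⟨hmaxr, hmaxa⟩ := mem_filter.mp (F.max'_mem hFne)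
  have hminmax : pmin ≤ pmax := F.min'_le _ (F.max'_mem hFne)
  have hmaxn : pmax ≤ n := by have := mem_range.mp hmaxr; omega
  have hminn : pmin ≤ n := le_trans hminmax hmaxn
  set x1 := φ x ((pmin : ℝ) * T) with hx1def
  have hx1 : x1 ∈ C := hinv x hx _
  set n1 := pmax - pmin with hn1
  have e_mid : (pmin : ℝ) * T + ((n1 : ℕ) : ℝ) * T = (pmax : ℝ) * T := by
    rw [hn1, Nat.cast_sub hminmax]; ring
  set x2 := φ x1 ((n1 : ℝ) * T) with hx2def
  have hx2 : x2 ∈ C := hinv x1 hx1 _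
  have hx2eq : x2 = φ x ((pmax : ℝ) * T) := by
    rw [hx2def, hx1def, hadd, e_mid]
  -- decomposition of g x (nT)
  have e_pre : (pmin : ℝ) * T + ((n - pmin : ℕ) : ℝ) * T = (n : ℝ) * T := by
    rw [Nat.cast_sub hminn]; ring
  have s1 : g x ((n : ℝ) * T) = g x ((pmin : ℝ) * T) + g x1 (((n - pmin : ℕ) : ℝ) * T) := by
    rw [← e_pre, hcoc]
  have e_split : ((n - pmin : ℕ) : ℝ) * T = ((n1 : ℕ) : ℝ) * T + ((n - pmax : ℕ) : ℝ) * T := by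
    have h : n1 + (n - pmax) = n - pmin := by omega
    rw [← h]; push_cast; ring
  have s2 : g x1 (((n - pmin : ℕ) : ℝ) * T) = g x1 ((n1 : ℝ) * T) + g x2 (((n - pmax : ℕ) : ℝ) * T) := by
    rw [e_split, hcoc]
  -- prefix bound
  have hpre : g x ((pmin : ℝ) * T) ≤ ((k : ℝ) - 1) * M := by
    rcases Nat.eq_zero_or_pos pmin with h | h
    · rw [h]
      have : ((0 : ℕ) : ℝ) * T = 0 := by norm_num
      rw [this, hg0 x]
      exact mul_nonneg (by linarith) hM0
    · obtain ⟨m, hpm⟩ : ∃ m, pmin = m + 1 := ⟨pmin - 1, by omega⟩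
      have e3 : ((pmin : ℕ) : ℝ) * T = ((m : ℕ) : ℝ) * T + T := by
        rw [hpm]; push_cast; ring
      rw [e3, hcoc]
      have hblock := pde_block φ g T h0 hadd hcoc C hinv a M hM0 hMT hchain
        ((Finset.univ : Finset (Fin k)).erase i) x hx m ?_
      · have hcerase : (((Finset.univ : Finset (Fin k)).erase i).card : ℝ) = (k : ℝ) - 1 := by
          rw [Finset.card_erase_of_mem (Finset.mem_univ _), Finset.card_univ, Fintype.card_fin,
            Nat.cast_sub hk]
          norm_num
        rw [hcerase] at hblock
        have hstep : g (φ x ((m : ℕ) * T)) T ≤ M := hMT _ (hinv x hx _)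
        have : ((k : ℝ) - 1 - 1) * M + M = ((k : ℝ) - 1) * M := by ring
        linarith
      · intro j hj
        refine Finset.mem_erase.mpr ⟨?_, Finset.mem_univ _⟩
        intro hEq
        have hjF : j ∈ F := mem_filter.mpr ⟨mem_range.mpr (by omega), hEq⟩
        have := F.min'_le j hjF
        omega
  -- middle bound
  have hmid : g x1 ((n1 : ℝ) * T) ≤ -((q : ℝ) - 1) / 2 := by
    have hmeq : a (φ x1 ((n1 : ℝ) * T)) = a x1 := by
      have h1 : φ x1 ((n1 : ℝ) * T) = φ x ((pmax : ℝ) * T) := by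
        rw [hx1def, hadd, e_mid]
      rw [h1, hmaxa, hx1def, hmina]
    have h := pde_mid φ g T h0 hadd hcoc C hinv a hcyc n1 x1 hx1 hmeq
    set F'' := (Finset.range (n1 + 1)).filter (fun j : ℕ => a (φ x1 ((j : ℝ) * T)) = a x1) with hF''
    have hqle : q ≤ F''.card := by
      apply Finset.card_le_card_of_injOn (fun j => j - pmin)
      · intro j hj
        obtain ⟨hjr, hja⟩ := mem_filter.mp hj
        have hjmin : pmin ≤ j := F.min'_le j hj
        have hjmax : j ≤ pmax := F.le_max' j hj
        refine mem_filter.mpr ⟨mem_range.mpr (by show j - pmin < n1 + 1; omega), ?_⟩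
        have e4 : (pmin : ℝ) * T + ((j - pmin : ℕ) : ℝ) * T = (j : ℝ) * T := by
          rw [Nat.cast_sub hjmin]; ring
        have h5 : φ x1 (((j - pmin : ℕ) : ℝ) * T) = φ x ((j : ℝ) * T) := by
          rw [hx1def, hadd, e4]
        rw [h5, hja, hx1def, hmina]
      · intro u hu v hv huv
        have hu1 : pmin ≤ u := F.min'_le u hu
        have hv1 : pmin ≤ v := F.min'_le v hv
        simp only at huv
        omega
    have hqleR : (q : ℝ) ≤ (F''.card : ℝ) := by exact_mod_cast hqle
    linarith
  -- suffix bound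
  have hsuf : g x2 (((n - pmax : ℕ) : ℝ) * T) ≤ ((k : ℝ) - 1) * M := by
    rcases Nat.eq_zero_or_pos (n - pmax) with h | h
    · rw [h]
      have : ((0 : ℕ) : ℝ) * T = 0 := by norm_num
      rw [this, hg0 x2]
      exact mul_nonneg (by linarith) hM0
    · obtain ⟨m, hmeq⟩ : ∃ m, n - pmax = m + 1 := ⟨n - pmax - 1, by omega⟩
      rw [hmeq]
      have e5 : (((m + 1 : ℕ)) : ℝ) * T = T + ((m : ℕ) : ℝ) * T := by push_cast; ring
      rw [e5, hcoc]
      have hstep : g x2 T ≤ M := hMT _ hx2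
      set x3 := φ x2 T with hx3def
      have hx3 : x3 ∈ C := hinv x2 hx2 _
      have hblock := pde_block φ g T h0 hadd hcoc C hinv a M hM0 hMT hchain
        ((Finset.univ : Finset (Fin k)).erase i) x3 hx3 m ?_
      · have hcerase : (((Finset.univ : Finset (Fin k)).erase i).card : ℝ) = (k : ℝ) - 1 := by
          rw [Finset.card_erase_of_mem (Finset.mem_univ _), Finset.card_univ, Fintype.card_fin,
            Nat.cast_sub hk]
          norm_num
        rw [hcerase] at hblock
        have : M + ((k : ℝ) - 1 - 1) * M = ((k : ℝ) - 1) * M := by ring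
        linarith
      · intro j hj
        have hphi : φ x3 ((j : ℝ) * T) = φ x (((pmax + 1 + j : ℕ) : ℝ) * T) := by
          rw [hx3def, hx2eq, hadd, hadd]
          congr 1
          push_cast; ring
        rw [hphi]
        refine Finset.mem_erase.mpr ⟨?_, Finset.mem_univ _⟩
        intro hEq
        have hjF : (pmax + 1 + j) ∈ F := mem_filter.mpr ⟨mem_range.mpr (by omega), hEq⟩
        have := F.le_max' _ hjF
        omega
  -- combine at integer times
  have hint : g x ((n : ℝ) * T) ≤ ((k : ℝ) - 1) * M + (-((q : ℝ) - 1) / 2) + ((k : ℝ) - 1) * M := by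
    rw [s1, s2]
    linarith
  -- remainder
  set r := t - (n : ℝ) * T with hr
  have hr0 : 0 ≤ r := by rw [hr]; linarith
  have hrT : r ≤ T := by
    have : ((n : ℝ) + 1) * T = (n : ℝ) * T + T := by ring
    rw [hr]; linarith
  have hsplit_t : g x t = g x ((n : ℝ) * T) + g (φ x ((n : ℝ) * T)) r := by
    have h : t = (n : ℝ) * T + r := by rw [hr]; ring
    rw [h] at *
    exact hcoc x _ _
  have hrem : g (φ x ((n : ℝ) * T)) r ≤ M := le_trans (le_abs_self _) (hM _ r hr0 hrT)
  have htotal : g x t ≤ 2 * ((k : ℝ) - 1) * M + M - ((q : ℝ) - 1) / 2 := by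
    rw [hsplit_t]
    linarith
  have hMeq : 2 * ((k : ℝ) - 1) * M + M = (2 * (k : ℝ) - 1) * M := by ring
  constructor
  · rw [← hfl]
    have h1 : ((n : ℝ) + 1 - (k : ℝ)) / (2 * (k : ℝ)) < ((q : ℝ) - 1) / 2 + 1 / 2 := by
      rw [div_lt_iff₀ (by positivity)]
      have : (((q : ℝ) - 1) / 2 + 1 / 2) * (2 * (k : ℝ)) = (k : ℝ) * (q : ℝ) := by ring
      rw [this]
      linarith
    linarith
  · have htq : t ≤ (k : ℝ) * (q : ℝ) * T := by
      have h2 : ((n : ℝ) + 1) * T ≤ ((k : ℝ) * (q : ℝ)) * T :=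
        mul_le_mul_of_nonneg_right hq hT0.le
      linarith
    have h2kT : (0 : ℝ) < 2 * (k : ℝ) * T := by positivity
    have h3 : (1 / (2 * (k : ℝ) * T)) * t ≤ (q : ℝ) / 2 := by
      rw [show (1 / (2 * (k : ℝ) * T)) * t = t / (2 * (k : ℝ) * T) from by ring,
        div_le_iff₀ h2kT]
      have : (q : ℝ) / 2 * (2 * (k : ℝ) * T) = (k : ℝ) * (q : ℝ) * T := by ring
      rw [this]
      exact htq
    linarith
end
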